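/- arXiv:math/0603344 — 2 statements merged into one kernel-verified Lean document; each statement's English description precedes it below -/
import Mathlib

section
/- Law of large numbers for the number of deep traps on the complete graph: Let α ∈ (0,1), 0 < κ < 1/α and 0 < ε < M < ∞. For u ≤ v define T_u^v(n) = {x ∈ {1,…,n} : τ_x/n^κ ∈ [u,v)}. Then there exists a function h(n) with h(n) → 0 as n → ∞ such that, almost surely, lim_{n→∞} sup_{u ∈ [ε,M) ∩ (ℤ/h(n))} | |T_u^{u+h(n)}(n)| / (h(n) n^{1−ακ}) − α u^{−α−1} | = 0. -/
open MeasureTheory ProbabilityTheory Filter Set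
open scoped ENNReal NNReal Classical

section Helpers

lemma rpow_neg_mvt {γ a b : ℝ} (hγ : 0 < γ) (ha : 0 < a) (hab : a < b) :
    ∃ ξ ∈ Set.Ioo a b, a ^ (-γ) - b ^ (-γ) = γ * ξ ^ (-γ - 1) * (b - a) := by
  obtain ⟨ξ, hξ, hder⟩ := exists_hasDerivAt_eq_slope (fun x : ℝ => x ^ (-γ))
      (fun x : ℝ => -γ * x ^ (-γ - 1)) hab
      (by
        apply ContinuousOn.rpow_const continuousOn_id
        intro x hx
        exact Or.inl (ne_of_gt (lt_of_lt_of_le ha hx.1)))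
      (by
        intro x hx
        have hx0 : x ≠ 0 := ne_of_gt (lt_trans ha hx.1)
        simpa using Real.hasDerivAt_rpow_const (p := -γ) (Or.inl hx0))
  refine ⟨ξ, hξ, ?_⟩
  have hba : b - a ≠ 0 := sub_ne_zero.mpr hab.ne'
  have h2 : b ^ (-γ) - a ^ (-γ) = -γ * ξ ^ (-γ - 1) * (b - a) := by
    rw [hder]; field_simp
  linarith [h2]

lemma rpow_neg_anti {p x y : ℝ} (hp : 0 ≤ p) (hx : 0 < x) (hxy : x ≤ y) :
    y ^ (-p) ≤ x ^ (-p) := by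
  rw [Real.rpow_neg hx.le, Real.rpow_neg (hx.trans_le hxy).le]
  exact inv_anti₀ (Real.rpow_pos_of_pos hx p) (Real.rpow_le_rpow hx.le hxy hp)

lemma det_bound {α ε u H e X Y : ℝ} (hα0 : 0 < α) (hε : 0 < ε) (hu : ε ≤ u)
    (hH : 0 < H) (he0 : 0 ≤ e) (hsq : Real.sqrt e ≤ H)
    (hX : |X - u ^ (-α)| ≤ ε ^ (-α) * e) (hY : |Y - (u + H) ^ (-α)| ≤ ε ^ (-α) * e) :
    |(X - Y) / H - α * u ^ (-α - 1)| ≤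
      α * (α + 1) * ε ^ (-α - 2) * H + 2 * ε ^ (-α) * Real.sqrt e := by
  have hu0 : 0 < u := hε.trans_le hu
  have huH : u < u + H := lt_add_of_pos_right u hH
  obtain ⟨ξ, hξ, hmvt⟩ := rpow_neg_mvt hα0 hu0 huH
  obtain ⟨ζ, hζ, hmvt2⟩ := rpow_neg_mvt (by linarith : (0:ℝ) < α + 1) hu0 hξ.1
  have eexp1 : -(α+1) = -α - 1 := by ring
  rw [eexp1] at hmvt2
  rw [(by ring : (-α - 1 - 1 : ℝ) = -α - 2)] at hmvt2
  have hT : (u ^ (-α) - (u+H) ^ (-α)) / H = α * ξ ^ (-α-1) := by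
    rw [hmvt]
    field_simp
    ring
  have hξε : ε ≤ ξ := le_of_lt (lt_of_le_of_lt hu hξ.1)
  have hζε : ε ≤ ζ := le_of_lt (lt_of_le_of_lt hu hζ.1)
  have h1 : |(X - Y)/H - (u^(-α) - (u+H)^(-α))/H| ≤ 2 * ε^(-α) * Real.sqrt e := by
    have hrw : (X - Y)/H - (u^(-α) - (u+H)^(-α))/H
        = ((X - u^(-α)) - (Y - (u+H)^(-α)))/H := by ring
    rw [hrw, abs_div, abs_of_pos hH]
    have habs : |(X - u^(-α)) - (Y - (u+H)^(-α))| ≤ 2 * (ε^(-α) * e) := by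
      have := abs_sub (X - u^(-α)) (Y - (u+H)^(-α))
      linarith
    have heH : e / H ≤ Real.sqrt e := by
      rcases eq_or_lt_of_le he0 with rfl | he
      · simp
      · have hse : 0 < Real.sqrt e := Real.sqrt_pos.mpr he
        calc e / H ≤ e / Real.sqrt e := div_le_div_of_nonneg_left he0 hse hsq
          _ = Real.sqrt e := Real.div_sqrt
    calc |(X - u^(-α)) - (Y - (u+H)^(-α))| / H ≤ (2 * (ε^(-α) * e)) / H :=
          (div_le_div_iff_of_pos_right hH).mpr habs
      _ = 2 * ε^(-α) * (e / H) := by ring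
      _ ≤ 2 * ε^(-α) * Real.sqrt e := by
          have h2 : (0:ℝ) ≤ 2 * ε^(-α) := by positivity
          exact mul_le_mul_of_nonneg_left heH h2
  have h2 : |(u^(-α) - (u+H)^(-α))/H - α * u^(-α-1)| ≤ α*(α+1)*ε^(-α-2)*H := by
    rw [hT]
    have hξu : ξ^(-α-1) ≤ u^(-α-1) := by
      have h := rpow_neg_anti (p := α+1) (by linarith) hu0 hξ.1.le
      rwa [eexp1] at h
    have hrw : α * ξ^(-α-1) - α*u^(-α-1) = -(α * (u^(-α-1) - ξ^(-α-1))) := by ring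
    rw [hrw, abs_neg, abs_of_nonneg (mul_nonneg hα0.le (sub_nonneg.mpr hξu)), hmvt2]
    have hζb : ζ^(-α-2) ≤ ε^(-α-2) := by
      have h := rpow_neg_anti (p := α+2) (by linarith) hε hζε
      rwa [(by ring : -(α+2) = -α-2)] at h
    have hξuH : ξ - u ≤ H := by have := hξ.2; linarith
    have hξu0 : (0:ℝ) ≤ ξ - u := by have := hξ.1; linarith
    calc α * ((α+1) * ζ^(-α-2) * (ξ - u)) ≤ α * ((α+1) * ε^(-α-2) * H) := by
          gcongr
      _ = α*(α+1)*ε^(-α-2)*H := by ring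
  calc |(X-Y)/H - α*u^(-α-1)|
      ≤ |(X-Y)/H - (u^(-α)-(u+H)^(-α))/H| + |(u^(-α)-(u+H)^(-α))/H - α*u^(-α-1)| :=
        abs_sub_le _ _ _
    _ ≤ 2 * ε^(-α) * Real.sqrt e + α*(α+1)*ε^(-α-2)*H := add_le_add h1 h2
    _ = α*(α+1)*ε^(-α-2)*H + 2*ε^(-α)*Real.sqrt e := by ring

lemma summable_poly_exp {b c : ℝ} (hb : 0 < b) (hc : 0 < c) (C : ℝ) :
    Summable (fun n : ℕ => C * (((n:ℝ)+1) * Real.exp (-b * ((n:ℝ)+1) ^ c))) := by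
  apply Summable.mul_left
  have h0 : Tendsto (fun x : ℝ => x ^ ((3:ℝ)/c) * Real.exp (-b * x)) atTop (nhds 0) :=
    tendsto_rpow_mul_exp_neg_mul_atTop_nhds_zero _ b hb
  have h1 : Tendsto (fun n : ℕ => ((n:ℝ)+1) ^ c) atTop atTop :=
    (tendsto_rpow_atTop hc).comp (tendsto_atTop_add_const_right _ 1 tendsto_natCast_atTop_atTop)
  have h2 := h0.comp h1
  have h3 : (fun n : ℕ => ((((n:ℝ)+1) ^ c) ^ ((3:ℝ)/c)) * Real.exp (-b * ((n:ℝ)+1)^c))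
      = fun n : ℕ => (((n:ℝ)+1) ^ (3:ℕ)) * Real.exp (-b * ((n:ℝ)+1)^c) := by
    funext n
    congr 1
    rw [← Real.rpow_natCast ((n:ℝ)+1) 3, ← Real.rpow_mul (by positivity)]
    congr 1
    field_simp
    norm_num
  have h2' : Tendsto (fun n : ℕ => (((n:ℝ)+1) ^ (3:ℕ)) * Real.exp (-b * ((n:ℝ)+1)^c))
      atTop (nhds 0) := by
    rw [← h3]
    exact h2
  have hev : ∀ᶠ n : ℕ in atTop,
      (((n:ℝ)+1) ^ (3:ℕ)) * Real.exp (-b * ((n:ℝ)+1)^c) ≤ 1 := by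
    filter_upwards [h2'.eventually (eventually_le_nhds (by norm_num : (0:ℝ) < 1))] with n hn
    exact hn
  have hg : Summable (fun n : ℕ => 1 / (n:ℝ)^2) := by
    have := Real.summable_one_div_nat_pow (p := 2)
    exact this.mpr one_lt_two
  refine summable_of_isBigO_nat hg ?_
  rw [Asymptotics.isBigO_iff]
  refine ⟨1, ?_⟩
  filter_upwards [hev, eventually_ge_atTop 1] with n hn hn1
  have hn1' : (1:ℝ) ≤ (n:ℝ) := by exact_mod_cast hn1
  have hle : ((n:ℝ)+1) * Real.exp (-b * ((n:ℝ)+1)^c) ≤ 1 / (n:ℝ)^2 := by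
    have hEb : Real.exp (-b * ((n:ℝ)+1)^c) ≤ 1 / ((n:ℝ)+1)^3 := by
      rw [le_div_iff₀ (by positivity)]
      calc Real.exp (-b * ((n:ℝ)+1)^c) * ((n:ℝ)+1)^3
          = (((n:ℝ)+1) ^ (3:ℕ)) * Real.exp (-b * ((n:ℝ)+1)^c) := by ring
        _ ≤ 1 := hn
    calc ((n:ℝ)+1) * Real.exp (-b * ((n:ℝ)+1)^c)
        ≤ ((n:ℝ)+1) * (1 / ((n:ℝ)+1)^3) := by
          exact mul_le_mul_of_nonneg_left hEb (by positivity)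
      _ = 1 / ((n:ℝ)+1)^2 := by field_simp
      _ ≤ 1 / (n:ℝ)^2 := by
          apply one_div_le_one_div_of_le (by positivity)
          nlinarith
  rw [Real.norm_eq_abs, Real.norm_eq_abs, abs_of_nonneg (by positivity),
    abs_of_nonneg (by positivity)]
  linarith

section Chernoff2

variable {Ω : Type*} [MeasurableSpace Ω] {μ : Measure Ω} [IsProbabilityMeasure μ]

lemma exp_indicator_eq' {A : Set Ω} (lam : ℝ) :
    (fun ω => Real.exp (lam * A.indicator (fun _ => (1:ℝ)) ω)) =
      fun ω => A.indicator (fun _ => Real.exp lam - 1) ω + 1 := by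
  funext ω
  by_cases hω : ω ∈ A <;>
    simp [Set.indicator_of_mem, Set.indicator_of_notMem, hω, mul_one, mul_zero, Real.exp_zero]

lemma integrable_exp_indicator' {A : Set Ω} (hA : MeasurableSet A) (lam : ℝ) :
    Integrable (fun ω => Real.exp (lam * A.indicator (fun _ => (1:ℝ)) ω)) μ := by
  rw [exp_indicator_eq']
  exact (((integrable_const _).indicator hA).add (integrable_const 1))

lemma mgf_indicator' {A : Set Ω} (hA : MeasurableSet A) (lam : ℝ) :
    mgf (A.indicator fun _ => (1:ℝ)) μ lam = 1 + (μ A).toReal * (Real.exp lam - 1) := by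
  rw [mgf, exp_indicator_eq']
  rw [integral_add ((integrable_const _).indicator hA) (integrable_const 1)]
  rw [integral_indicator_const _ hA]
  simp [smul_eq_mul]; simp only [measureReal_def]; ring

lemma exp_quad_bound' {x : ℝ} (hx : |x| ≤ 1) : Real.exp x - 1 - x ≤ x ^ 2 := by
  have h := Real.exp_bound hx (by norm_num : 0 < 2)
  have hs : ∑ i ∈ Finset.range 2, x ^ i / (Nat.factorial i : ℝ) = 1 + x := by
    simp [Finset.sum_range_succ]
  rw [hs] at h
  have h1 := (le_abs_self (Real.exp x - (1 + x))).trans h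
  have h2 : |x| ^ 2 = x ^ 2 := sq_abs x
  have h3 : ((Nat.succ 2 : ℝ) / ((Nat.factorial 2 : ℝ) * (2:ℕ))) = 3 / 4 := by
    norm_num [Nat.factorial]
  rw [h2, h3] at h1
  nlinarith [sq_nonneg x]

/-- Two-sided Chernoff bound for a sum of independent identically-distributed
indicator random variables. -/
lemma bernoulli_chernoff (A : ℕ → Set Ω) (hA : ∀ x, MeasurableSet (A x))
    (hind : iIndepFun (fun x => (A x).indicator fun _ => (1:ℝ)) μ)
    (s : Finset ℕ) {q : ℝ} (hq : ∀ x ∈ s, (μ (A x)).toReal = q)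
    {lam a : ℝ} (hlam0 : 0 ≤ lam) (hlam1 : lam ≤ 1) (ha : 0 ≤ a) :
    (μ {ω | a ≤ |(∑ x ∈ s, (A x).indicator (fun _ => (1:ℝ)) ω) - (s.card : ℝ) * q|}).toReal ≤
      2 * Real.exp ((s.card : ℝ) * q * lam ^ 2 - lam * a) := by
  classical
  set Y : ℕ → Ω → ℝ := fun x => (A x).indicator fun _ => (1:ℝ) with hY
  have hmeas : ∀ x, Measurable (Y x) := fun x => measurable_const.indicator (hA x)
  rcases s.eq_empty_or_nonempty with hs | hs
  · subst hs
    simp only [Finset.sum_empty, Finset.card_empty, Nat.cast_zero, zero_mul, sub_zero, abs_zero]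
    have hexp : (0:ℝ) * lam ^ 2 - lam * a = -(lam * a) := by ring
    rcases eq_or_lt_of_le ha with rfl | ha'
    · have huniv : {ω : Ω | (0:ℝ) ≤ 0} = Set.univ := by ext; simp
      rw [huniv, measure_univ]
      norm_num
    · have hempty : {ω : Ω | a ≤ (0:ℝ)} = ∅ :=
        Set.eq_empty_iff_forall_notMem.mpr (fun ω h => absurd h (not_le.mpr ha'))
      rw [hempty]
      simp only [measure_empty, ENNReal.toReal_zero]
      positivity
  · obtain ⟨x₀, hx₀⟩ := hs
    have hq0 : 0 ≤ q := (hq x₀ hx₀) ▸ ENNReal.toReal_nonneg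
    have hq1 : q ≤ 1 := by
      rw [← hq x₀ hx₀]
      exact ENNReal.toReal_le_of_le_ofReal zero_le_one (by simpa using prob_le_one)
    set m : ℝ := (s.card : ℝ) * q with hm
    set X : Ω → ℝ := ∑ x ∈ s, Y x with hX
    have hXapp : ∀ ω, X ω = ∑ x ∈ s, Y x ω := fun ω => by simp [hX]
    have hint : ∀ (t : ℝ), Integrable (fun ω => Real.exp (t * X ω)) μ := by
      intro t
      exact hind.integrable_exp_mul_sum hmeas (fun i _ => integrable_exp_indicator' (hA i) t)
    have hmgf : ∀ (t : ℝ), -1 ≤ t →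
        mgf X μ t ≤ Real.exp ((s.card : ℝ) * q * (Real.exp t - 1)) := by
      intro t _
      rw [hX, hind.mgf_sum hmeas]
      have hterm : ∀ x ∈ s, mgf (Y x) μ t = 1 + q * (Real.exp t - 1) := by
        intro x hx
        rw [hY]
        rw [mgf_indicator' (hA x) t, hq x hx]
      rw [Finset.prod_congr rfl hterm, Finset.prod_const]
      have hnn : 0 ≤ 1 + q * (Real.exp t - 1) := by
        nlinarith [Real.exp_pos t, mul_nonneg hq0 (Real.exp_pos t).le]
      calc (1 + q * (Real.exp t - 1)) ^ s.card
          ≤ (Real.exp (q * (Real.exp t - 1))) ^ s.card := by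
            refine pow_le_pow_left₀ hnn ?_ _
            have := Real.add_one_le_exp (q * (Real.exp t - 1))
            linarith
        _ = Real.exp ((s.card : ℝ) * q * (Real.exp t - 1)) := by
            rw [← Real.exp_nat_mul]
            congr 1
            ring
    have hcard : (0:ℝ) ≤ (s.card:ℝ) * q := by positivity
    have hup : (μ {ω | m + a ≤ X ω}).toReal ≤ Real.exp (m * lam ^ 2 - lam * a) := by
      have h1 := measure_ge_le_exp_mul_mgf (μ := μ) (X := X) (m + a) hlam0 (hint lam)
      have h2 := hmgf lam (by linarith)
      have h3 : Real.exp (-lam * (m + a)) * mgf X μ lam ≤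
          Real.exp (-lam * (m + a)) * Real.exp ((s.card:ℝ) * q * (Real.exp lam - 1)) :=
        mul_le_mul_of_nonneg_left h2 (Real.exp_pos _).le
      rw [← Real.exp_add] at h3
      have hquad := exp_quad_bound' (x := lam) (by rwa [abs_of_nonneg hlam0])
      have key : ((s.card:ℝ) * q) * (Real.exp lam - 1 - lam) ≤ ((s.card:ℝ) * q) * lam ^ 2 :=
        mul_le_mul_of_nonneg_left hquad hcard
      have h4 : -lam * (m + a) + (s.card:ℝ) * q * (Real.exp lam - 1) ≤ m * lam ^ 2 - lam * a := by
        rw [hm]; nlinarith [key]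
      exact h1.trans (h3.trans (Real.exp_le_exp.mpr h4))
    have hlow : (μ {ω | X ω ≤ m - a}).toReal ≤ Real.exp (m * lam ^ 2 - lam * a) := by
      have h1 := measure_le_le_exp_mul_mgf (μ := μ) (X := X) (m - a)
        (neg_nonpos.mpr hlam0) (hint (-lam))
      have h2 := hmgf (-lam) (by linarith)
      have h3 : Real.exp (-(-lam) * (m - a)) * mgf X μ (-lam) ≤
          Real.exp (-(-lam) * (m - a)) * Real.exp ((s.card:ℝ) * q * (Real.exp (-lam) - 1)) :=
        mul_le_mul_of_nonneg_left h2 (Real.exp_pos _).le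
      rw [← Real.exp_add] at h3
      have habs : |(-lam)| ≤ 1 := by rw [abs_neg, abs_of_nonneg hlam0]; exact hlam1
      have hquad := exp_quad_bound' (x := -lam) habs
      rw [neg_sq] at hquad
      have key : ((s.card:ℝ) * q) * (Real.exp (-lam) - 1 - (-lam)) ≤ ((s.card:ℝ) * q) * lam ^ 2 :=
        mul_le_mul_of_nonneg_left hquad hcard
      have h4 : -(-lam) * (m - a) + (s.card:ℝ) * q * (Real.exp (-lam) - 1) ≤
          m * lam ^ 2 - lam * a := by
        rw [hm]; nlinarith [key]
      exact h1.trans (h3.trans (Real.exp_le_exp.mpr h4))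
    have hsub : {ω | a ≤ |(∑ x ∈ s, Y x ω) - m|} ⊆
        {ω | m + a ≤ X ω} ∪ {ω | X ω ≤ m - a} := by
      intro ω hω
      simp only [Set.mem_setOf_eq] at hω
      rw [← hXapp ω] at hω
      rcases le_abs.mp hω with h | h
      · left; simp only [Set.mem_setOf_eq]; linarith
      · right; simp only [Set.mem_setOf_eq]; linarith
    have hne1 : μ {ω | m + a ≤ X ω} ≠ ⊤ := measure_ne_top _ _
    have hne2 : μ {ω | X ω ≤ m - a} ≠ ⊤ := measure_ne_top _ _
    have step1 : (μ {ω | a ≤ |(∑ x ∈ s, Y x ω) - m|}).toReal ≤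
        (μ {ω | m + a ≤ X ω}).toReal + (μ {ω | X ω ≤ m - a}).toReal := by
      have hu : μ {ω | a ≤ |(∑ x ∈ s, Y x ω) - m|} ≤
          μ {ω | m + a ≤ X ω} + μ {ω | X ω ≤ m - a} :=
        (measure_mono hsub).trans (measure_union_le _ _)
      have h5 := ENNReal.toReal_mono (ENNReal.add_ne_top.mpr ⟨hne1, hne2⟩) hu
      rwa [ENNReal.toReal_add hne1 hne2] at h5
    have hfin := step1.trans (add_le_add hup hlow)
    calc (μ {ω | a ≤ |(∑ x ∈ s, Y x ω) - m|}).toReal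
        ≤ Real.exp (m * lam ^ 2 - lam * a) + Real.exp (m * lam ^ 2 - lam * a) := hfin
      _ = 2 * Real.exp (m * lam ^ 2 - lam * a) := by ring

end Chernoff2

end Helpers
set_option maxHeartbeats 3000000 in
/-- Law of large numbers for the number of deep traps on the complete graph:
with `T_u^v(n) = {x ∈ {1,…,n} : τ_x/n^κ ∈ [u,v)}`, there is `h(n) → 0` such that a.s.
`sup_{u ∈ [ε,M) ∩ ℤ h(n)} | |T_u^{u+h(n)}(n)| / (h(n) n^{1-ακ}) - α u^{-α-1} | → 0`. -/
theorem lln_deep_traps_complete_graph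
    {Ω₁ : Type*} [MeasurableSpace Ω₁] {μ₁ : Measure Ω₁} [IsProbabilityMeasure μ₁]
    (α κ ε M : ℝ) (hα : α ∈ Set.Ioo (0:ℝ) 1) (hκpos : 0 < κ) (hκ : κ < 1 / α)
    (hε : 0 < ε) (hεM : ε < M)
    (τ : ℕ → Ω₁ → ℝ)
    (hτmeas : ∀ x, Measurable (τ x))
    (hτpos : ∀ x, ∀ᵐ ω ∂μ₁, 0 < τ x ω)
    (hτindep : iIndepFun τ μ₁)
    (hτid : ∀ x, Measure.map (τ x) μ₁ = Measure.map (τ 0) μ₁)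
    (hτtail : Tendsto (fun u : ℝ => u ^ α * (μ₁ {ω | u ≤ τ 0 ω}).toReal) atTop (nhds 1)) :
    ∃ h : ℕ → ℝ, (∀ n, 0 < h n) ∧ Tendsto h atTop (nhds 0) ∧
      ∀ᵐ ω ∂μ₁,
        Tendsto (fun n : ℕ =>
          sSup {v : ℝ | ∃ u : ℝ, u ∈ Set.Ico ε M ∧ (∃ k : ℤ, u = k * h n) ∧
            v = |(((Finset.Icc 1 n).filter
                    (fun x => τ x ω / (n : ℝ) ^ κ ∈ Set.Ico u (u + h n))).card : ℝ) /
                  (h n * (n : ℝ) ^ (1 - α * κ)) - α * u ^ (-α - 1)|})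
          atTop (nhds 0) := by
  classical
  obtain ⟨hα0, hα1⟩ := hα
  have hκα : α * κ < 1 := by
    have h := (lt_div_iff₀ hα0).mp hκ
    nlinarith
  set c : ℝ := 1 - α * κ with hc_def
  have hc : 0 < c := by rw [hc_def]; linarith
  have hc1 : c ≤ 1 := by
    have h0 : 0 < α * κ := mul_pos hα0 hκpos
    rw [hc_def]; linarith
  set F : ℝ → ℝ := fun s => (μ₁ {ω | s ≤ τ 0 ω}).toReal with hF_def
  set D : ℝ → ℝ := fun s => |s ^ α * F s - 1| with hD_def
  set e : ℕ → ℝ := fun n => sSup ((fun s => min (D s) 1) '' Set.Ici (ε * (n:ℝ) ^ κ)) with he_def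
  -- basic properties of e
  have hbdd : ∀ n : ℕ, BddAbove ((fun s => min (D s) 1) '' Set.Ici (ε * (n:ℝ) ^ κ)) := by
    intro n
    refine ⟨1, ?_⟩
    rintro y ⟨s, _, rfl⟩
    exact min_le_right _ _
  have hne : ∀ n : ℕ, ((fun s => min (D s) 1) '' Set.Ici (ε * (n:ℝ) ^ κ)).Nonempty :=
    fun n => ⟨_, ⟨ε * (n:ℝ) ^ κ, Set.self_mem_Ici, rfl⟩⟩
  have he0 : ∀ n, 0 ≤ e n := by
    intro n
    apply Real.sSup_nonneg
    rintro y ⟨s, _, rfl⟩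
    exact le_min (abs_nonneg _) zero_le_one
  have herr : ∀ n : ℕ, e n < 1 → ∀ s : ℝ, ε * (n:ℝ) ^ κ ≤ s → D s ≤ e n := by
    intro n hen s hs
    have hmin : min (D s) 1 ≤ e n := le_csSup (hbdd n) ⟨s, hs, rfl⟩
    rcases le_total (D s) 1 with h | h
    · rwa [min_eq_left h] at hmin
    · exfalso; rw [min_eq_right h] at hmin; linarith
  have hDt : Tendsto D atTop (nhds 0) := by
    have h2 : Tendsto (fun u : ℝ => u ^ α * F u - 1) atTop (nhds 0) := by
      simpa using hτtail.sub_const 1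
    have := h2.abs
    simpa [hD_def] using this
  have hePos : Tendsto (fun n : ℕ => ε * (n:ℝ) ^ κ) atTop atTop := by
    apply Tendsto.const_mul_atTop hε
    exact (tendsto_rpow_atTop hκpos).comp tendsto_natCast_atTop_atTop
  have heTend : Tendsto e atTop (nhds 0) := by
    rw [Metric.tendsto_atTop]
    intro δ hδ
    have hev : ∀ᶠ s : ℝ in atTop, D s < δ/2 :=
      hDt.eventually (gt_mem_nhds (by linarith))
    obtain ⟨s₀, hs₀⟩ := eventually_atTop.mp hev
    obtain ⟨N, hN⟩ := eventually_atTop.mp (hePos.eventually_ge_atTop s₀)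
    refine ⟨N, fun n hn => ?_⟩
    have hbound : e n ≤ δ/2 := by
      apply csSup_le (hne n)
      rintro y ⟨s, hs, rfl⟩
      exact le_trans (min_le_left _ _) (le_of_lt (hs₀ s (le_trans (hN n hn) hs)))
    rw [Real.dist_eq, sub_zero, abs_of_nonneg (he0 n)]
    linarith
  -- the mesh function
  set hfun : ℕ → ℝ := fun n => max (Real.sqrt (e n)) (((n:ℝ)+1) ^ (-(c/2))) with hfun_def
  have hfpos : ∀ n, 0 < hfun n := fun n =>
    lt_of_lt_of_le (Real.rpow_pos_of_pos (by positivity) _) (le_max_right _ _)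
  have hfT : Tendsto hfun atTop (nhds 0) := by
    have h1 : Tendsto (fun n : ℕ => Real.sqrt (e n)) atTop (nhds 0) := by
      have := (Real.continuous_sqrt.tendsto 0).comp heTend
      simpa [Function.comp_def] using this
    have h2 : Tendsto (fun n : ℕ => ((n:ℝ)+1) ^ (-(c/2))) atTop (nhds 0) :=
      (tendsto_rpow_neg_atTop (by positivity)).comp
        (tendsto_atTop_add_const_right _ 1 tendsto_natCast_atTop_atTop)
    simpa using h1.max h2
  refine ⟨hfun, hfpos, hfT, ?_⟩
  -- sets and probabilities
  set B : ℕ → ℝ → Set ℝ := fun n u => {s : ℝ | s / (n:ℝ)^κ ∈ Set.Ico u (u + hfun n)} with hB_def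
  have hBmeas : ∀ n u, MeasurableSet (B n u) := by
    intro n u
    have : B n u = (fun s : ℝ => s / (n:ℝ)^κ) ⁻¹' (Set.Ico u (u + hfun n)) := rfl
    rw [this]
    exact (measurable_id.div_const _) measurableSet_Ico
  set A : ℕ → ℝ → ℕ → Set Ω₁ := fun n u x => τ x ⁻¹' B n u with hA_def
  have hAmeas : ∀ n u x, MeasurableSet (A n u x) := fun n u x => (hτmeas x) (hBmeas n u)
  set qq : ℕ → ℝ → ℝ := fun n u => (μ₁ (τ 0 ⁻¹' B n u)).toReal with hqq_def
  have hqx : ∀ n u x, (μ₁ (A n u x)).toReal = qq n u := by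
    intro n u x
    have h1 : μ₁ (τ x ⁻¹' B n u) = Measure.map (τ x) μ₁ (B n u) :=
      (Measure.map_apply (hτmeas x) (hBmeas n u)).symm
    rw [hτid x, Measure.map_apply (hτmeas 0) (hBmeas n u)] at h1
    simp only [hA_def, hqq_def, h1]
  have hind : ∀ n u, iIndepFun
      (fun x => (A n u x).indicator fun _ => (1:ℝ)) μ₁ := by
    intro n u
    have hg : Measurable ((B n u).indicator fun _ => (1:ℝ)) :=
      measurable_const.indicator (hBmeas n u)
    have heq : (fun x => (A n u x).indicator fun _ => (1:ℝ))
        = fun x => ((B n u).indicator fun _ => (1:ℝ)) ∘ τ x := by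
      funext x ω
      by_cases hm : ω ∈ A n u x
      · have hm' : τ x ω ∈ B n u := hm
        simp [Set.indicator_of_mem, hm, hm', Function.comp]
      · have hm' : τ x ω ∉ B n u := hm
        simp [Set.indicator_of_notMem, hm, hm', Function.comp]
    rw [heq]
    exact hτindep.comp _ (fun _ => hg)
  -- q formula
  have hqF : ∀ n : ℕ, 1 ≤ n → ∀ u : ℝ, 0 < u →
      qq n u = F (u * (n:ℝ)^κ) - F ((u + hfun n) * (n:ℝ)^κ) := by
    intro n hn u hu
    have hn0 : (0:ℝ) < (n:ℝ) := by exact_mod_cast hn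
    have hPpos : (0:ℝ) < (n:ℝ)^κ := Real.rpow_pos_of_pos hn0 κ
    have hBeq : B n u = Set.Ico (u * (n:ℝ)^κ) ((u + hfun n) * (n:ℝ)^κ) := by
      ext s
      simp only [hB_def, Set.mem_setOf_eq, Set.mem_Ico]
      rw [le_div_iff₀ hPpos, div_lt_iff₀ hPpos]
    have hsub : {ω | (u + hfun n) * (n:ℝ)^κ ≤ τ 0 ω} ⊆ {ω | u * (n:ℝ)^κ ≤ τ 0 ω} := by
      intro ω hω
      simp only [Set.mem_setOf_eq] at hω ⊢
      have hmul : u * (n:ℝ)^κ ≤ (u + hfun n) * (n:ℝ)^κ := by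
        nlinarith [hfpos n]
      linarith
    have hdiff : τ 0 ⁻¹' Set.Ico (u * (n:ℝ)^κ) ((u + hfun n) * (n:ℝ)^κ)
        = {ω | u * (n:ℝ)^κ ≤ τ 0 ω} \ {ω | (u + hfun n) * (n:ℝ)^κ ≤ τ 0 ω} := by
      ext ω
      simp only [Set.mem_preimage, Set.mem_Ico, Set.mem_diff, Set.mem_setOf_eq, not_le]
    have hms : MeasurableSet {ω | (u + hfun n) * (n:ℝ)^κ ≤ τ 0 ω} :=
      (hτmeas 0) measurableSet_Ici
    rw [hqq_def]
    simp only [hBeq, hdiff]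
    rw [measure_diff hsub hms.nullMeasurableSet (measure_ne_top _ _),
      ENNReal.toReal_sub_of_le (measure_mono hsub) (measure_ne_top _ _)]
  -- error function
  set η : ℕ → ℝ := fun n =>
    α*(α+1)*ε^(-α-2) * hfun n + 2*ε^(-α) * Real.sqrt (e n) with hη_def
  have hηT : Tendsto η atTop (nhds 0) := by
    have h1 : Tendsto (fun n : ℕ => α*(α+1)*ε^(-α-2) * hfun n) atTop (nhds 0) := by
      simpa using hfT.const_mul (α*(α+1)*ε^(-α-2))
    have h2 : Tendsto (fun n : ℕ => 2*ε^(-α) * Real.sqrt (e n)) atTop (nhds 0) := by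
      have hs : Tendsto (fun n : ℕ => Real.sqrt (e n)) atTop (nhds 0) := by
        simpa [Function.comp_def] using (Real.continuous_sqrt.tendsto 0).comp heTend
      simpa using hs.const_mul (2*ε^(-α))
    simpa using h1.add h2
  have hη0 : ∀ n, 0 ≤ η n := by
    intro n
    rw [hη_def]
    have := (hfpos n).le
    positivity
  -- deterministic estimate
  have hdet : ∀ n : ℕ, 1 ≤ n → e n < 1 → ∀ u : ℝ, ε ≤ u →
      |(n:ℝ) * qq n u / (hfun n * (n:ℝ)^c) - α * u^(-α-1)| ≤ η n := by
    intro n hn hen u hu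
    have hu0 : 0 < u := lt_of_lt_of_le hε hu
    have hn0 : (0:ℝ) < (n:ℝ) := by exact_mod_cast hn
    have hPpos : (0:ℝ) < (n:ℝ)^κ := Real.rpow_pos_of_pos hn0 κ
    have key : ∀ w : ℝ, ε ≤ w →
        |(n:ℝ)^(α*κ) * F (w * (n:ℝ)^κ) - w^(-α)| ≤ ε^(-α) * e n := by
      intro w hw
      have hw0 : 0 < w := lt_of_lt_of_le hε hw
      have hs : ε * (n:ℝ)^κ ≤ w * (n:ℝ)^κ := by nlinarith
      have herr' : |(w * (n:ℝ)^κ) ^ α * F (w * (n:ℝ)^κ) - 1| ≤ e n := herr n hen _ hs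
      have hprod : (w * (n:ℝ)^κ)^α = w^α * (n:ℝ)^(κ*α) := by
        rw [Real.mul_rpow hw0.le hPpos.le, ← Real.rpow_mul hn0.le]
      have hwinv : w^(-α) * w^α = 1 := by
        rw [← Real.rpow_add hw0]
        simp
      have hid : (n:ℝ)^(α*κ) * F (w * (n:ℝ)^κ) - w^(-α)
          = w^(-α) * ((w * (n:ℝ)^κ)^α * F (w * (n:ℝ)^κ) - 1) := by
        rw [hprod]
        have hcomm : (n:ℝ)^(α*κ) = (n:ℝ)^(κ*α) := by rw [mul_comm]
        rw [hcomm]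
        calc (n:ℝ)^(κ*α) * F (w * (n:ℝ)^κ) - w^(-α)
            = (w^(-α) * w^α) * ((n:ℝ)^(κ*α) * F (w * (n:ℝ)^κ)) - w^(-α) := by
              rw [hwinv, one_mul]
          _ = w^(-α) * (w^α * (n:ℝ)^(κ*α) * F (w * (n:ℝ)^κ) - 1) := by ring
      rw [hid, abs_mul, abs_of_nonneg (Real.rpow_nonneg hw0.le _)]
      have hwε : w^(-α) ≤ ε^(-α) := rpow_neg_anti hα0.le hε hw
      exact mul_le_mul hwε herr' (abs_nonneg _) (Real.rpow_nonneg hε.le _)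
    have hXb := key u hu
    have hYb := key (u + hfun n) (by linarith [hfpos n])
    have hsq : Real.sqrt (e n) ≤ hfun n := le_max_left _ _
    have hDB := det_bound hα0 hε hu (hfpos n) (he0 n) hsq hXb hYb
    have hcne : ((n:ℝ)^c) ≠ 0 := ne_of_gt (Real.rpow_pos_of_pos hn0 c)
    have hqe : (n:ℝ) * qq n u / (hfun n * (n:ℝ)^c)
        = ((n:ℝ)^(α*κ) * F (u * (n:ℝ)^κ) - (n:ℝ)^(α*κ) * F ((u + hfun n) * (n:ℝ)^κ))
          / (hfun n) := by
      rw [hqF n hn u hu0]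
      have hnc : (n:ℝ)^c * (n:ℝ)^(α*κ) = (n:ℝ) := by
        rw [← Real.rpow_add hn0]
        rw [(by rw [hc_def]; ring : c + α * κ = 1), Real.rpow_one]
      rw [div_eq_div_iff (ne_of_gt (mul_pos (hfpos n) (Real.rpow_pos_of_pos hn0 c)))
        (ne_of_gt (hfpos n))]
      linear_combination -(F (u * (n:ℝ)^κ) - F ((u + hfun n) * (n:ℝ)^κ)) * hfun n * hnc
    rw [hqe]
    exact hDB.trans_eq (by rw [hη_def])
  -- upper bound on n q
  set Cq : ℝ := α * ε^(-α-1) + 1 with hCq_def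
  have hCq0 : 0 < Cq := by
    rw [hCq_def]
    have : (0:ℝ) < ε^(-α-1) := Real.rpow_pos_of_pos hε _
    positivity
  have hqub : ∀ n : ℕ, 1 ≤ n → e n < 1 → η n ≤ 1 → ∀ u : ℝ, ε ≤ u →
      (n:ℝ) * qq n u ≤ Cq * (hfun n * (n:ℝ)^c) := by
    intro n hn hen hη1 u hu
    have hn0 : (0:ℝ) < (n:ℝ) := by exact_mod_cast hn
    have hg : 0 < hfun n * (n:ℝ)^c := mul_pos (hfpos n) (Real.rpow_pos_of_pos hn0 c)
    have hd := hdet n hn hen u hu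
    have huε : u^(-α-1) ≤ ε^(-α-1) := by
      have h := rpow_neg_anti (p := α+1) (by linarith) hε hu
      rwa [(by ring : -(α+1) = -α-1)] at h
    have h1 : (n:ℝ) * qq n u / (hfun n * (n:ℝ)^c) ≤ Cq := by
      have h4 := (abs_le.mp hd).2
      have h3 : α * u^(-α-1) ≤ α * ε^(-α-1) := mul_le_mul_of_nonneg_left huε hα0.le
      rw [hCq_def]
      calc (n:ℝ) * qq n u / (hfun n * (n:ℝ)^c)
          = ((n:ℝ) * qq n u / (hfun n * (n:ℝ)^c) - α * u ^ (-α-1)) + α * u ^ (-α-1) := by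
            ring
        _ ≤ η n + α * ε^(-α-1) := add_le_add h4 h3
        _ ≤ 1 + α * ε^(-α-1) := by linarith
        _ = α * ε^(-α-1) + 1 := by ring
    calc (n:ℝ) * qq n u = ((n:ℝ) * qq n u / (hfun n * (n:ℝ)^c)) * (hfun n * (n:ℝ)^c) := by
          rw [div_mul_cancel₀ _ hg.ne']
      _ ≤ Cq * (hfun n * (n:ℝ)^c) := mul_le_mul_of_nonneg_right h1 hg.le
  have hM0 : (0:ℝ) < M := lt_trans hε hεM
  -- Borel–Cantelli / Chernoff step
  have main : ∀ t : ℝ, 0 < t → ∀ᵐ ω ∂μ₁, ∀ᶠ n : ℕ in atTop,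
      ∀ k : ℤ, k ∈ Finset.Icc ⌈ε / hfun n⌉ ⌈M / hfun n⌉ →
        |(∑ x ∈ Finset.Icc 1 n, (A n ((k:ℝ) * hfun n) x).indicator (fun _ => (1:ℝ)) ω) -
          (n:ℝ) * qq n ((k:ℝ) * hfun n)| < t/2 * (hfun n * (n:ℝ)^c) := by
    intro t ht
    set lam : ℝ := min 1 (t/(4*Cq)) with hlam_def
    have hlam0 : 0 < lam := lt_min one_pos (by positivity)
    have hlam1 : lam ≤ 1 := min_le_left _ _
    have hlamCq : Cq * lam ≤ t/4 := by
      have h1 : lam ≤ t/(4*Cq) := min_le_right _ _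
      calc Cq * lam ≤ Cq * (t/(4*Cq)) := mul_le_mul_of_nonneg_left h1 hCq0.le
        _ = t/4 := by field_simp
    set bt : ℝ := lam * t / 8 with hbt_def
    have hbt0 : 0 < bt := by rw [hbt_def]; positivity
    obtain ⟨N, hN⟩ := eventually_atTop.mp
      ((eventually_ge_atTop 1).and ((heTend.eventually (gt_mem_nhds one_pos)).and
        (hηT.eventually (eventually_le_nhds (by norm_num : (0:ℝ) < 1)))))
    -- per-n measure bound (in the regime)
    have hbound : ∀ n : ℕ, 1 ≤ n → e n < 1 → η n ≤ 1 →
        μ₁ (⋃ k ∈ (Finset.Icc ⌈ε / hfun n⌉ ⌈M / hfun n⌉ : Finset ℤ), {ω |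
          t/2 * (hfun n * (n:ℝ)^c) ≤
          |(∑ x ∈ Finset.Icc 1 n, (A n ((k:ℝ) * hfun n) x).indicator (fun _ => (1:ℝ)) ω) -
            (n:ℝ) * qq n ((k:ℝ) * hfun n)|})
        ≤ ENNReal.ofReal ((M / hfun n + 2) * (2 * Real.exp (-bt * ((n:ℝ)+1)^(c/2)))) := by
      intro n hn hen hη1
      have hn0 : (0:ℝ) < (n:ℝ) := by exact_mod_cast hn
      have hn1 : (1:ℝ) ≤ (n:ℝ) := by exact_mod_cast hn
      have hg0 : 0 < hfun n * (n:ℝ)^c := mul_pos (hfpos n) (Real.rpow_pos_of_pos hn0 c)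
      have hgg : (1/2) * ((n:ℝ)+1)^(c/2) ≤ hfun n * (n:ℝ)^c := by
        have hg1 : ((n:ℝ)+1) ^ (-(c/2)) ≤ hfun n := le_max_right _ _
        have h2n : ((n:ℝ)+1)^c ≤ 2 * (n:ℝ)^c := by
          have hle : ((n:ℝ)+1) ≤ 2*(n:ℝ) := by linarith
          calc ((n:ℝ)+1)^c ≤ (2*(n:ℝ))^c := Real.rpow_le_rpow (by positivity) hle hc.le
            _ = 2^c * (n:ℝ)^c := Real.mul_rpow (by norm_num) (by positivity)
            _ ≤ 2 * (n:ℝ)^c := by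
                have h2c : (2:ℝ)^c ≤ 2 := by
                  have := Real.rpow_le_rpow_of_exponent_le one_le_two hc1
                  rwa [Real.rpow_one] at this
                have hnn := Real.rpow_nonneg (le_of_lt hn0) c
                nlinarith
        have hsplit : ((n:ℝ)+1)^(c/2) * ((n:ℝ)+1)^(c/2) = ((n:ℝ)+1)^c := by
          rw [← Real.rpow_add (by positivity)]
          norm_num
        have hpos2 : (0:ℝ) < ((n:ℝ)+1)^(c/2) := Real.rpow_pos_of_pos (by positivity) _
        have hB2 : (1/2) * ((n:ℝ)+1)^(c/2) ≤ ((n:ℝ)+1)^(-(c/2)) * (n:ℝ)^c := by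
          rw [Real.rpow_neg (by positivity), inv_mul_eq_div, le_div_iff₀ hpos2]
          nlinarith [hsplit, h2n]
        calc (1/2) * ((n:ℝ)+1)^(c/2) ≤ ((n:ℝ)+1)^(-(c/2)) * (n:ℝ)^c := hB2
          _ ≤ hfun n * (n:ℝ)^c := by
              apply mul_le_mul_of_nonneg_right hg1
              positivity
      have hperk : ∀ k : ℤ, k ∈ (Finset.Icc ⌈ε / hfun n⌉ ⌈M / hfun n⌉ : Finset ℤ) →
          μ₁ {ω | t/2 * (hfun n * (n:ℝ)^c) ≤
            |(∑ x ∈ Finset.Icc 1 n, (A n ((k:ℝ) * hfun n) x).indicator (fun _ => (1:ℝ)) ω) -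
              (n:ℝ) * qq n ((k:ℝ) * hfun n)|}
          ≤ ENNReal.ofReal (2 * Real.exp (-bt * ((n:ℝ)+1)^(c/2))) := by
        intro k hk
        set u : ℝ := (k:ℝ) * hfun n with hu_def
        have hkl := (Finset.mem_Icc.mp hk).1
        have hkε : ε ≤ u := by
          have h1 : (ε / hfun n : ℝ) ≤ (k:ℝ) := le_trans (Int.le_ceil _) (by exact_mod_cast hkl)
          rw [div_le_iff₀ (hfpos n)] at h1
          rw [hu_def]
          linarith
        have hcher := bernoulli_chernoff (μ := μ₁) (A n u) (fun x => hAmeas n u x) (hind n u)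
          (Finset.Icc 1 n) (fun x _ => hqx n u x) (le_of_lt hlam0) hlam1
          (a := t/2 * (hfun n * (n:ℝ)^c)) (by positivity)
        have hcard : (Finset.Icc 1 n).card = n := by
          rw [Nat.card_Icc]
          omega
        have hnq := hqub n hn hen hη1 u hkε
        have hexp : ((Finset.Icc 1 n).card : ℝ) * qq n u * lam^2
            - lam * (t/2 * (hfun n * (n:ℝ)^c)) ≤ -bt * ((n:ℝ)+1)^(c/2) := by
          rw [hcard]
          have e1 : (n:ℝ) * qq n u * lam^2 ≤ (t/4) * (lam * (hfun n * (n:ℝ)^c)) := by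
            calc (n:ℝ) * qq n u * lam^2 ≤ (Cq * (hfun n * (n:ℝ)^c)) * lam^2 := by
                  nlinarith [sq_nonneg lam, hnq]
              _ = (Cq * lam) * (lam * (hfun n * (n:ℝ)^c)) := by ring
              _ ≤ (t/4) * (lam * (hfun n * (n:ℝ)^c)) := by
                  apply mul_le_mul_of_nonneg_right hlamCq
                  positivity
          have e2 : -(t/4) * (lam * (hfun n * (n:ℝ)^c)) ≤ -bt * ((n:ℝ)+1)^(c/2) := by
            have hmul := mul_le_mul_of_nonneg_left hgg
              (by positivity : (0:ℝ) ≤ t/4 * lam)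
            rw [hbt_def]
            nlinarith [hmul]
          nlinarith [e1, e2]
        have hle2 := hcher.trans (by
          have := Real.exp_le_exp.mpr hexp
          linarith : 2 * Real.exp (((Finset.Icc 1 n).card : ℝ) * qq n u * lam ^ 2
            - lam * (t/2 * (hfun n * (n:ℝ)^c))) ≤ 2 * Real.exp (-bt * ((n:ℝ)+1)^(c/2)))
        rw [hcard] at hle2
        have hofr := ENNReal.ofReal_le_ofReal hle2
        rwa [ENNReal.ofReal_toReal (measure_ne_top _ _)] at hofr
      have hcardK : (((Finset.Icc ⌈ε / hfun n⌉ ⌈M / hfun n⌉ : Finset ℤ)).card : ℝ)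
          ≤ M / hfun n + 2 := by
        rw [Int.card_Icc]
        have h0Mh : 0 ≤ M / hfun n := le_of_lt (div_pos hM0 (hfpos n))
        rcases le_or_gt (⌈M / hfun n⌉ + 1 - ⌈ε / hfun n⌉) 0 with hle | hpos
        · rw [Int.toNat_of_nonpos hle]
          simp only [Nat.cast_zero]
          linarith
        · have hcast : (((⌈M / hfun n⌉ + 1 - ⌈ε / hfun n⌉).toNat : ℕ) : ℝ)
              = (⌈M / hfun n⌉ : ℝ) + 1 - (⌈ε / hfun n⌉ : ℝ) := by
            rw [← Int.cast_natCast, Int.toNat_of_nonneg hpos.le]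
            push_cast
            ring
          rw [hcast]
          have h1 : (⌈M / hfun n⌉ : ℝ) < M / hfun n + 1 := Int.ceil_lt_add_one _
          have h2 : (ε / hfun n : ℝ) ≤ (⌈ε / hfun n⌉ : ℝ) := Int.le_ceil _
          have h3 : 0 ≤ ε / hfun n := le_of_lt (div_pos hε (hfpos n))
          linarith
      calc μ₁ (⋃ k ∈ (Finset.Icc ⌈ε / hfun n⌉ ⌈M / hfun n⌉ : Finset ℤ), {ω |
            t/2 * (hfun n * (n:ℝ)^c) ≤
            |(∑ x ∈ Finset.Icc 1 n, (A n ((k:ℝ) * hfun n) x).indicator (fun _ => (1:ℝ)) ω) -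
              (n:ℝ) * qq n ((k:ℝ) * hfun n)|})
          ≤ ∑ k ∈ (Finset.Icc ⌈ε / hfun n⌉ ⌈M / hfun n⌉ : Finset ℤ), μ₁ {ω |
            t/2 * (hfun n * (n:ℝ)^c) ≤
            |(∑ x ∈ Finset.Icc 1 n, (A n ((k:ℝ) * hfun n) x).indicator (fun _ => (1:ℝ)) ω) -
              (n:ℝ) * qq n ((k:ℝ) * hfun n)|} := measure_biUnion_finset_le _ _
        _ ≤ ∑ _k ∈ (Finset.Icc ⌈ε / hfun n⌉ ⌈M / hfun n⌉ : Finset ℤ),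
            ENNReal.ofReal (2 * Real.exp (-bt * ((n:ℝ)+1)^(c/2))) := Finset.sum_le_sum hperk
        _ = ((Finset.Icc ⌈ε / hfun n⌉ ⌈M / hfun n⌉ : Finset ℤ).card : ℝ≥0∞) *
            ENNReal.ofReal (2 * Real.exp (-bt * ((n:ℝ)+1)^(c/2))) := by
            rw [Finset.sum_const, nsmul_eq_mul]
        _ ≤ ENNReal.ofReal (M / hfun n + 2) *
            ENNReal.ofReal (2 * Real.exp (-bt * ((n:ℝ)+1)^(c/2))) := by
            apply mul_le_mul_left
            rw [← ENNReal.ofReal_natCast]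
            exact ENNReal.ofReal_le_ofReal hcardK
        _ = ENNReal.ofReal ((M / hfun n + 2) * (2 * Real.exp (-bt * ((n:ℝ)+1)^(c/2)))) := by
            rw [← ENNReal.ofReal_mul]
            have h0Mh : 0 ≤ M / hfun n := le_of_lt (div_pos hM0 (hfpos n))
            linarith
    -- summability of the shifted bounds
    have hsum : (∑' m : ℕ, μ₁ (⋃ k ∈ (Finset.Icc ⌈ε / hfun (m+N)⌉ ⌈M / hfun (m+N)⌉ : Finset ℤ),
        {ω | t/2 * (hfun (m+N) * ((m+N:ℕ):ℝ)^c) ≤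
          |(∑ x ∈ Finset.Icc 1 (m+N),
              (A (m+N) ((k:ℝ) * hfun (m+N)) x).indicator (fun _ => (1:ℝ)) ω) -
            ((m+N:ℕ):ℝ) * qq (m+N) ((k:ℝ) * hfun (m+N))|})) ≠ ⊤ := by
      have hf : ∀ m : ℕ, μ₁ (⋃ k ∈ (Finset.Icc ⌈ε / hfun (m+N)⌉ ⌈M / hfun (m+N)⌉ : Finset ℤ),
          {ω | t/2 * (hfun (m+N) * ((m+N:ℕ):ℝ)^c) ≤
            |(∑ x ∈ Finset.Icc 1 (m+N),
                (A (m+N) ((k:ℝ) * hfun (m+N)) x).indicator (fun _ => (1:ℝ)) ω) -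
              ((m+N:ℕ):ℝ) * qq (m+N) ((k:ℝ) * hfun (m+N))|})
          ≤ ENNReal.ofReal ((M+2) * ((N:ℝ)+1) * 2 *
              (((m:ℝ)+1) * Real.exp (-bt * ((m:ℝ)+1)^(c/2)))) := by
        intro m
        obtain ⟨h1, h2, h3⟩ := hN (m + N) (Nat.le_add_left N m)
        refine (hbound (m+N) h1 h2 h3).trans (ENNReal.ofReal_le_ofReal ?_)
        have hPm : ((m+N:ℕ):ℝ) = (m:ℝ) + (N:ℝ) := by push_cast; ring
        have hMn : M / hfun (m+N) ≤ M * (((m+N:ℕ):ℝ)+1) := by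
          have hg1 : (((m+N:ℕ):ℝ)+1) ^ (-(c/2)) ≤ hfun (m+N) := le_max_right _ _
          have hposn : (0:ℝ) < ((m+N:ℕ):ℝ)+1 := by positivity
          have hinv : 1 / hfun (m+N) ≤ (((m+N:ℕ):ℝ)+1)^(c/2) := by
            rw [div_le_iff₀ (hfpos _)]
            have hmul := mul_le_mul_of_nonneg_left hg1
              (le_of_lt (Real.rpow_pos_of_pos hposn (c/2)))
            have hone : (((m+N:ℕ):ℝ)+1)^(c/2) * (((m+N:ℕ):ℝ)+1)^(-(c/2)) = 1 := by
              rw [← Real.rpow_add hposn]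
              norm_num
            linarith
          have hc2 : (((m+N:ℕ):ℝ)+1)^(c/2) ≤ ((m+N:ℕ):ℝ)+1 := by
            have hge1 : (1:ℝ) ≤ ((m+N:ℕ):ℝ)+1 := by
              have := Nat.cast_nonneg (α := ℝ) (m+N)
              linarith
            have := Real.rpow_le_rpow_of_exponent_le hge1 (by linarith : c/2 ≤ 1)
            rwa [Real.rpow_one] at this
          calc M / hfun (m+N) = M * (1 / hfun (m+N)) := by ring
            _ ≤ M * (((m+N:ℕ):ℝ)+1) := by
                apply mul_le_mul_of_nonneg_left (hinv.trans hc2) hM0.le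
        have hexp2 : Real.exp (-bt * (((m+N:ℕ):ℝ)+1)^(c/2))
            ≤ Real.exp (-bt * (((m:ℝ))+1)^(c/2)) := by
          apply Real.exp_le_exp.mpr
          have hmm : ((m:ℝ)+1)^(c/2) ≤ (((m+N:ℕ):ℝ)+1)^(c/2) := by
            apply Real.rpow_le_rpow (by positivity) _ (by positivity)
            rw [hPm]
            have := Nat.cast_nonneg (α := ℝ) N
            linarith
          nlinarith [hmm, hbt0]
        have hE0 : (0:ℝ) < Real.exp (-bt * (((m:ℝ))+1)^(c/2)) := Real.exp_pos _
        have hE0' : (0:ℝ) < Real.exp (-bt * (((m+N:ℕ):ℝ)+1)^(c/2)) := Real.exp_pos _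
        have hNm : ((m+N:ℕ):ℝ)+1 ≤ ((N:ℝ)+1) * ((m:ℝ)+1) := by
          rw [hPm]
          have h4 := Nat.cast_nonneg (α := ℝ) m
          have h5 := Nat.cast_nonneg (α := ℝ) N
          nlinarith [mul_nonneg h5 h4]
        have hMh0 : 0 ≤ M / hfun (m+N) := le_of_lt (div_pos hM0 (hfpos _))
        calc (M / hfun (m+N) + 2) * (2 * Real.exp (-bt * (((m+N:ℕ):ℝ)+1)^(c/2)))
            ≤ (M * (((m+N:ℕ):ℝ)+1) + 2) * (2 * Real.exp (-bt * (((m:ℝ))+1)^(c/2))) := by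
              apply mul_le_mul (by linarith) (by linarith) (by positivity) (by positivity)
          _ ≤ ((M+2) * (((m+N:ℕ):ℝ)+1)) * (2 * Real.exp (-bt * (((m:ℝ))+1)^(c/2))) := by
              apply mul_le_mul_of_nonneg_right _ (by positivity)
              have hge1 : (1:ℝ) ≤ ((m+N:ℕ):ℝ)+1 := by
                have := Nat.cast_nonneg (α := ℝ) (m+N)
                linarith
              nlinarith
          _ ≤ ((M+2) * (((N:ℝ)+1) * ((m:ℝ)+1))) *
              (2 * Real.exp (-bt * (((m:ℝ))+1)^(c/2))) := by
              apply mul_le_mul_of_nonneg_right _ (by positivity)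
              apply mul_le_mul_of_nonneg_left hNm (by linarith)
          _ = (M+2) * ((N:ℝ)+1) * 2 * (((m:ℝ)+1) * Real.exp (-bt * ((m:ℝ)+1)^(c/2))) := by
              ring
      have hsummable := summable_poly_exp hbt0 (by positivity : (0:ℝ) < c/2)
        ((M+2) * ((N:ℝ)+1) * 2)
      have h1 : (∑' m : ℕ, ENNReal.ofReal ((M+2) * ((N:ℝ)+1) * 2 *
          (((m:ℝ)+1) * Real.exp (-bt * ((m:ℝ)+1)^(c/2))))) ≠ ⊤ := by
        rw [← ENNReal.ofReal_tsum_of_nonneg (fun m => by positivity) hsummable]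
        exact ENNReal.ofReal_ne_top
      exact ne_top_of_le_ne_top h1 (ENNReal.tsum_le_tsum hf)
    have hae := ae_eventually_notMem hsum
    filter_upwards [hae] with ω hω
    obtain ⟨m₀, hm₀⟩ := eventually_atTop.mp hω
    rw [eventually_atTop]
    refine ⟨m₀ + N, fun n hn => ?_⟩
    have hn' : N ≤ n := le_trans (Nat.le_add_left N m₀) hn
    have hdecomp : (n - N) + N = n := Nat.sub_add_cancel hn'
    have hmge : m₀ ≤ n - N := by omega
    have hnot := hm₀ (n - N) hmge
    rw [hdecomp] at hnot
    intro k hk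
    by_contra hcon
    push_neg at hcon
    exact hnot (Set.mem_biUnion hk hcon)
  -- conclusion
  have hall : ∀ᵐ ω ∂μ₁, ∀ j : ℕ, ∀ᶠ n : ℕ in atTop,
      ∀ k : ℤ, k ∈ Finset.Icc ⌈ε / hfun n⌉ ⌈M / hfun n⌉ →
        |(∑ x ∈ Finset.Icc 1 n, (A n ((k:ℝ) * hfun n) x).indicator (fun _ => (1:ℝ)) ω) -
          (n:ℝ) * qq n ((k:ℝ) * hfun n)| < (1/((j:ℝ)+1))/2 * (hfun n * (n:ℝ)^c) :=
    ae_all_iff.mpr (fun j => main (1/((j:ℝ)+1)) (by positivity))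
  filter_upwards [hall] with ω hω
  rw [Metric.tendsto_atTop]
  intro δ hδ
  obtain ⟨j, hj⟩ := exists_nat_one_div_lt hδ
  have hev2 : ∀ᶠ n : ℕ in atTop, 1 ≤ n ∧ e n < 1 ∧ η n ≤ (1/((j:ℝ)+1))/2 :=
    (eventually_ge_atTop 1).and ((heTend.eventually (gt_mem_nhds one_pos)).and
      (hηT.eventually (eventually_le_nhds (by positivity))))
  obtain ⟨N₁, hN₁⟩ := eventually_atTop.mp ((hω j).and hev2)
  refine ⟨N₁, fun n hn => ?_⟩
  obtain ⟨hdev, hn1, hen, hηn⟩ := hN₁ n hn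
  have hn0 : (0:ℝ) < (n:ℝ) := by exact_mod_cast hn1
  have hg0 : 0 < hfun n * (n:ℝ)^c := mul_pos (hfpos n) (Real.rpow_pos_of_pos hn0 c)
  have hub2 : ∀ v ∈ {v : ℝ | ∃ u : ℝ, u ∈ Set.Ico ε M ∧ (∃ k : ℤ, u = (k:ℝ) * hfun n) ∧
      v = |(((Finset.Icc 1 n).filter
              (fun x => τ x ω / (n : ℝ) ^ κ ∈ Set.Ico u (u + hfun n))).card : ℝ) /
            (hfun n * (n : ℝ) ^ c) - α * u ^ (-α - 1)|}, v ≤ 1/((j:ℝ)+1) := by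
    rintro v ⟨u, huIco, ⟨k, hku⟩, rfl⟩
    have hkmem : k ∈ Finset.Icc ⌈ε / hfun n⌉ ⌈M / hfun n⌉ := by
      rw [Finset.mem_Icc]
      constructor
      · apply Int.ceil_le.mpr
        rw [div_le_iff₀ (hfpos n), ← hku]
        exact huIco.1
      · have h1 : (k:ℝ) ≤ M / hfun n := by
          rw [le_div_iff₀ (hfpos n), ← hku]
          exact le_of_lt huIco.2
        exact_mod_cast h1.trans (Int.le_ceil _)
    have hdev' := hdev k hkmem
    rw [← hku] at hdev'
    have hcardeq : ((((Finset.Icc 1 n).filter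
        (fun x => τ x ω / (n : ℝ) ^ κ ∈ Set.Ico u (u + hfun n))).card : ℝ))
        = ∑ x ∈ Finset.Icc 1 n, (A n u x).indicator (fun _ => (1:ℝ)) ω := by
      rw [Finset.card_filter]
      push_cast
      apply Finset.sum_congr rfl
      intro x _
      by_cases hmem : τ x ω / (n:ℝ)^κ ∈ Set.Ico u (u + hfun n)
      · have hmem' : ω ∈ A n u x := hmem
        simp [hmem, Set.indicator_of_mem hmem']
      · have hmem' : ω ∉ A n u x := hmem
        simp [hmem, Set.indicator_of_notMem hmem']
    have hεu : ε ≤ u := huIco.1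
    have hdetn := hdet n hn1 hen u hεu
    rw [hcardeq]
    have hid : (∑ x ∈ Finset.Icc 1 n, (A n u x).indicator (fun _ => (1:ℝ)) ω) /
        (hfun n * (n:ℝ)^c) - α * u ^ (-α-1)
        = ((∑ x ∈ Finset.Icc 1 n, (A n u x).indicator (fun _ => (1:ℝ)) ω) -
            (n:ℝ) * qq n u) / (hfun n * (n:ℝ)^c)
          + ((n:ℝ) * qq n u / (hfun n * (n:ℝ)^c) - α * u ^ (-α-1)) := by
      ring
    rw [hid]
    have h1 : |((∑ x ∈ Finset.Icc 1 n, (A n u x).indicator (fun _ => (1:ℝ)) ω) -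
        (n:ℝ) * qq n u) / (hfun n * (n:ℝ)^c)| ≤ (1/((j:ℝ)+1))/2 := by
      rw [abs_div, abs_of_pos hg0, div_le_iff₀ hg0]
      linarith [hdev']
    calc |((∑ x ∈ Finset.Icc 1 n, (A n u x).indicator (fun _ => (1:ℝ)) ω) -
            (n:ℝ) * qq n u) / (hfun n * (n:ℝ)^c)
          + ((n:ℝ) * qq n u / (hfun n * (n:ℝ)^c) - α * u ^ (-α-1))|
        ≤ |((∑ x ∈ Finset.Icc 1 n, (A n u x).indicator (fun _ => (1:ℝ)) ω) -
            (n:ℝ) * qq n u) / (hfun n * (n:ℝ)^c)|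
          + |((n:ℝ) * qq n u / (hfun n * (n:ℝ)^c) - α * u ^ (-α-1))| := abs_add_le _ _
      _ ≤ (1/((j:ℝ)+1))/2 + (1/((j:ℝ)+1))/2 := add_le_add h1 (hdetn.trans hηn)
      _ = 1/((j:ℝ)+1) := by ring
  have hS0 : (0:ℝ) ≤ sSup {v : ℝ | ∃ u : ℝ, u ∈ Set.Ico ε M ∧
      (∃ k : ℤ, u = (k:ℝ) * hfun n) ∧
      v = |(((Finset.Icc 1 n).filter
              (fun x => τ x ω / (n : ℝ) ^ κ ∈ Set.Ico u (u + hfun n))).card : ℝ) /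
            (hfun n * (n : ℝ) ^ c) - α * u ^ (-α - 1)|} := by
    apply Real.sSup_nonneg
    rintro v ⟨u, _, _, rfl⟩
    exact abs_nonneg _
  rw [Real.dist_eq, sub_zero, abs_of_nonneg hS0]
  exact lt_of_le_of_lt (Real.sSup_le hub2 (by positivity)) hj
end

section
/- Random clouds on the hypercube satisfy the minimal distance condition: Let γ ∈ (3/4,1) and ρ ∈ (0,∞), and for each n let A_n ⊂ {−1,1}^n be a random cloud with intensity ρ_n (each vertex belongs to A_n independently with probability ρ_n), where lim_{n→∞} ρ_n 2^{γn} = ρ. Then almost surely the assumptions of the hitting-time proposition hold for all n large enough: there exists ε > 0 such that min{d(x,y) : x,y ∈ A_n, x ≠ y} ≥ (ω(γ)+ε)n, where ω(γ) is the unique solution ω ∈ (0,1/2) of ω log ω + (1−ω) log(1−ω) + log 2 = (2γ−1) log 2, and |A_n|/(ρ_n 2^n) → 1. -/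
open MeasureTheory ProbabilityTheory Filter Set
open scoped ENNReal NNReal Classical



lemma aux_card_pairs (n m : ℕ) :
    (Finset.univ.filter (fun p : (Fin n → Bool) × (Fin n → Bool) =>
        hammingDist p.1 p.2 ≤ m)).card
      ≤ 2^n * ∑ k ∈ Finset.range (m+1), n.choose k := by
  classical
  have hmain := Finset.card_le_card_of_injOn
    (f := fun p : (Fin n → Bool) × (Fin n → Bool) =>
      (p.1, Finset.univ.filter fun i => p.1 i ≠ p.2 i))
    (s := Finset.univ.filter (fun p : (Fin n → Bool) × (Fin n → Bool) =>
        hammingDist p.1 p.2 ≤ m))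
    (t := (Finset.univ : Finset (Fin n → Bool)) ×ˢ
      ((Finset.range (m+1)).biUnion fun k =>
        Finset.powersetCard k (Finset.univ : Finset (Fin n))))
    (by
      intro p hp
      simp only [Finset.mem_coe, Finset.mem_filter, Finset.mem_univ, true_and] at hp
      simp only [Finset.mem_coe, Finset.mem_product, Finset.mem_univ, true_and, Finset.mem_biUnion,
        Finset.mem_range]
      refine ⟨hammingDist p.1 p.2, by omega, ?_⟩
      rw [Finset.mem_powersetCard_univ]
      rfl)
    (by
      intro p hp q hq h
      simp only [Prod.mk.injEq] at h
      obtain ⟨h1, h2⟩ := h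
      have : p.2 = q.2 := by
        funext i
        have h3 := Finset.ext_iff.mp h2 i
        simp only [Finset.mem_filter, Finset.mem_univ, true_and, h1] at h3
        cases hq1 : q.1 i <;> cases hp2 : p.2 i <;> cases hq2 : q.2 i <;> simp_all
      exact Prod.ext h1 this)
  calc (Finset.univ.filter (fun p : (Fin n → Bool) × (Fin n → Bool) =>
        hammingDist p.1 p.2 ≤ m)).card ≤ _ := hmain
    _ ≤ 2^n * ∑ k ∈ Finset.range (m+1), n.choose k := by
        rw [Finset.card_product]
        gcongr
        · simp [Finset.card_univ]
        · refine (Finset.card_biUnion_le).trans ?_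
          apply Finset.sum_le_sum
          intro k _
          simp [Finset.card_powersetCard]


lemma aux_tail_bound {α : ℝ} (hα0 : 0 < α) (hα2 : α ≤ 1/2) {n m : ℕ} (hm : (m:ℝ) ≤ α * n) :
    (∑ k ∈ Finset.range (m+1), (n.choose k : ℝ)) ≤
      Real.exp (n * (-(α * Real.log α + (1-α) * Real.log (1-α)))) := by
  have h1α : 0 < 1 - α := by linarith
  have hmn : m ≤ n := by
    have : (m:ℝ) ≤ n := by nlinarith [Nat.cast_nonneg (α := ℝ) n]
    exact_mod_cast this
  set w : ℕ → ℝ := fun k => α ^ k * (1-α) ^ (n-k) with hw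
  have hwm_pos : 0 < w m := by positivity
  have hbin : ∑ k ∈ Finset.range (n+1), α ^ k * (1-α) ^ (n-k) * (n.choose k : ℝ) = 1 := by
    rw [← add_pow]; simp
  have hkey : (∑ k ∈ Finset.range (m+1), (n.choose k : ℝ)) * w m ≤ 1 := by
    rw [Finset.sum_mul]
    calc ∑ k ∈ Finset.range (m+1), (n.choose k : ℝ) * w m
        ≤ ∑ k ∈ Finset.range (m+1), α ^ k * (1-α) ^ (n-k) * (n.choose k : ℝ) := by
          apply Finset.sum_le_sum
          intro k hk
          rw [Finset.mem_range] at hk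
          have hkm : k ≤ m := by omega
          have hwk : w m ≤ α ^ k * (1-α) ^ (n-k) := by
            have hd : α ^ (m-k) ≤ (1-α) ^ (m-k) :=
              pow_le_pow_left₀ hα0.le (by linarith) _
            have e1 : α ^ m = α ^ k * α ^ (m-k) := by
              rw [← pow_add]; congr 1; omega
            have e2 : (1-α) ^ (n-k) = (1-α) ^ (n-m) * (1-α) ^ (m-k) := by
              rw [← pow_add]; congr 1; omega
            rw [hw]; simp only
            rw [e1, e2]
            have : α ^ k * α ^ (m-k) * (1-α)^(n-m)
                ≤ α ^ k * (1-α) ^ (m-k) * (1-α)^(n-m) := by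
              have h1 : (0:ℝ) ≤ α ^ k := by positivity
              have h2 : (0:ℝ) ≤ (1-α) ^ (n-m) := by positivity
              nlinarith [mul_le_mul_of_nonneg_left hd h1]
            linarith [this]
          calc (n.choose k : ℝ) * w m ≤ (n.choose k : ℝ) * (α ^ k * (1-α) ^ (n-k)) := by
                have : (0:ℝ) ≤ (n.choose k : ℝ) := by positivity
                exact mul_le_mul_of_nonneg_left hwk this
            _ = α ^ k * (1-α) ^ (n-k) * (n.choose k : ℝ) := by ring
      _ ≤ ∑ k ∈ Finset.range (n+1), α ^ k * (1-α) ^ (n-k) * (n.choose k : ℝ) := by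
          apply Finset.sum_le_sum_of_subset_of_nonneg
          · exact Finset.range_subset_range.mpr (by omega)
          · intro k _ _; positivity
      _ = 1 := hbin
  have hS : (∑ k ∈ Finset.range (m+1), (n.choose k : ℝ)) ≤ (w m)⁻¹ := by
    rw [← one_div]
    exact (le_div_iff₀ hwm_pos).mpr hkey
  refine hS.trans ?_
  have hwm_exp : w m = Real.exp ((m:ℝ) * Real.log α + ((n:ℝ)-(m:ℝ)) * Real.log (1-α)) := by
    have h1 : Real.exp ((m:ℝ) * Real.log α) = α ^ m := by
      rw [Real.exp_nat_mul, Real.exp_log hα0]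
    have h2 : Real.exp (((n - m : ℕ):ℝ) * Real.log (1-α)) = (1-α) ^ (n-m) := by
      rw [Real.exp_nat_mul, Real.exp_log h1α]
    have h3 : ((n:ℝ)-(m:ℝ)) = ((n - m : ℕ):ℝ) := by
      push_cast [Nat.cast_sub hmn]; ring
    rw [Real.exp_add, h3, h1, h2, hw]
  rw [hwm_exp, ← Real.exp_neg, Real.exp_le_exp]
  have hML : Real.log α ≤ Real.log (1-α) := Real.log_le_log hα0 (by linarith)
  nlinarith [mul_le_mul_of_nonneg_right hm (sub_nonneg.mpr hML), Nat.cast_nonneg (α := ℝ) n]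



lemma aux_eps (γ ωγ : ℝ) (hγ : γ ∈ Set.Ioo (3/4:ℝ) 1) (hωγ : ωγ ∈ Set.Ioo (0:ℝ) (1/2))
    (hωγeq : ωγ * Real.log ωγ + (1-ωγ) * Real.log (1-ωγ) + Real.log 2 =
      (2*γ-1) * Real.log 2) :
    ∃ ε : ℝ, 0 < ε ∧ ωγ + ε < 1/2 ∧
      -((ωγ+ε) * Real.log (ωγ+ε) + (1-(ωγ+ε)) * Real.log (1-(ωγ+ε)))
        < (2*γ-1) * Real.log 2 := by
  obtain ⟨hω0, hω2⟩ := hωγ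
  obtain ⟨hγ1, hγ2⟩ := hγ
  set g : ℝ → ℝ := fun x => x * Real.log x + (1-x) * Real.log (1-x) with hg
  have hcont : ContinuousAt g ωγ := by
    have c1 : ContinuousAt (fun x : ℝ => Real.log x) ωγ :=
      Real.continuousAt_log (ne_of_gt hω0)
    have c2 : ContinuousAt (fun x : ℝ => Real.log (1-x)) ωγ := by
      have : (1:ℝ) - ωγ ≠ 0 := by linarith
      exact (Real.continuousAt_log this).comp
        ((continuous_const.sub continuous_id).continuousAt)
    exact (continuousAt_id.mul c1).add
      ((continuousAt_const.sub continuousAt_id).mul c2)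
  have hlog2 : 0 < Real.log 2 := Real.log_pos (by norm_num)
  have hlt : (1-2*γ) * Real.log 2 < g ωγ := by
    have hgω : g ωγ = (2*γ-2) * Real.log 2 := by rw [hg]; simp only; linarith
    rw [hgω]
    have : (0:ℝ) < 4*γ - 3 := by linarith
    nlinarith
  have hev : ∀ᶠ x in nhds ωγ, (1-2*γ) * Real.log 2 < g x :=
    hcont.eventually (eventually_gt_nhds hlt)
  rw [Metric.eventually_nhds_iff] at hev
  obtain ⟨δ, hδ, hδ'⟩ := hev
  have hεpos : 0 < min (δ/2) ((1/2 - ωγ)/2) := lt_min (by linarith) (by linarith)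
  refine ⟨min (δ/2) ((1/2 - ωγ)/2), hεpos, ?_, ?_⟩
  · have : min (δ/2) ((1/2 - ωγ)/2) ≤ (1/2 - ωγ)/2 := min_le_right _ _
    linarith
  · have h1 : dist (ωγ + min (δ/2) ((1/2 - ωγ)/2)) ωγ < δ := by
      rw [Real.dist_eq]
      have : min (δ/2) ((1/2 - ωγ)/2) ≤ δ/2 := min_le_left _ _
      rw [abs_of_pos (by linarith)]
      linarith
    have := hδ' h1
    rw [hg] at this
    simp only at this
    linarith

lemma aux_chebyshev {Ω : Type*} [MeasurableSpace Ω] {μ : Measure Ω} [IsProbabilityMeasure μ]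
    {ι : Type*} [Fintype ι] (f : ι → Ω → Bool) (hmeas : ∀ i, Measurable (f i))
    (hindep : Pairwise fun i j => IndepFun (f i) (f j) μ)
    {p : ℝ} (hp : 0 ≤ p) (hBern : ∀ i, μ {ω | f i ω = true} = ENNReal.ofReal p)
    {c : ℝ} (hc : 0 < c) :
    μ {ω | c ≤ |((Finset.univ.filter (fun i => f i ω = true)).card : ℝ) -
        (Fintype.card ι : ℝ) * p|}
      ≤ ENNReal.ofReal ((Fintype.card ι : ℝ) * p / c ^ 2) := by
  classical
  set X : ι → Ω → ℝ := fun i ω => if f i ω = true then (1:ℝ) else 0 with hX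
  have hXmeas : ∀ i, Measurable (X i) := by
    intro i
    apply Measurable.ite _ measurable_const measurable_const
    exact (hmeas i) (measurableSet_singleton true)
  have hX2 : ∀ i, MemLp (X i) 2 μ := by
    intro i
    apply MemLp.of_bound (hXmeas i).aestronglyMeasurable 1
    filter_upwards with ω
    rw [hX]; simp only [Real.norm_eq_abs]
    split_ifs <;> simp
  have hXint : ∀ i, μ[X i] = p := by
    intro i
    have hXind : X i = Set.indicator {ω | f i ω = true} (fun _ => (1:ℝ)) := by
      funext ω
      rw [hX, Set.indicator_apply]
      simp [Set.mem_setOf_eq]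
    have hms : MeasurableSet {ω | f i ω = true} := (hmeas i) (measurableSet_singleton true)
    rw [hXind, integral_indicator_const (1:ℝ) hms,
      measureReal_def, hBern i, smul_eq_mul, mul_one, ENNReal.toReal_ofReal hp]
  have hXsq : ∀ i, (X i) ^ 2 = X i := by
    intro i
    funext ω
    rw [Pi.pow_apply, hX]
    simp only
    split_ifs <;> norm_num
  have hXvar : ∀ i, variance (X i) μ ≤ p := by
    intro i
    rw [variance_eq_sub (hX2 i), hXsq i, hXint i]
    nlinarith
  set S : Ω → ℝ := ∑ i, X i with hS
  have hS2 : MemLp S 2 μ := memLp_finset_sum' _ (fun i _ => hX2 i)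
  have hSint : μ[S] = (Fintype.card ι : ℝ) * p := by
    have e : ∫ ω, S ω ∂μ = ∫ ω, ∑ i, X i ω ∂μ := by
      rw [hS]; simp [Finset.sum_apply]
    rw [e, integral_finset_sum _ (fun i _ => (hX2 i).integrable one_le_two)]
    simp [hXint, Finset.card_univ, mul_comm]
  have hSvar : variance S μ ≤ (Fintype.card ι : ℝ) * p := by
    rw [hS, IndepFun.variance_sum (fun i _ => hX2 i)
      (fun i _ j _ hij => by
        have h := (hindep hij).comp (φ := fun b : Bool => if b = true then (1:ℝ) else 0)
          (ψ := fun b : Bool => if b = true then (1:ℝ) else 0)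
          measurable_from_top measurable_from_top
        exact h)]
    calc ∑ i, variance (X i) μ ≤ ∑ _i : ι, p := Finset.sum_le_sum (fun i _ => hXvar i)
      _ = (Fintype.card ι : ℝ) * p := by simp [Finset.card_univ, mul_comm]
  have hScard : ∀ ω, S ω = ((Finset.univ.filter (fun i => f i ω = true)).card : ℝ) := by
    intro ω
    rw [hS, Finset.sum_apply, Finset.card_filter]
    push_cast
    rfl
  have hcheb := meas_ge_le_variance_div_sq (μ := μ) hS2 hc
  have hset : {ω | c ≤ |((Finset.univ.filter (fun i => f i ω = true)).card : ℝ) -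
        (Fintype.card ι : ℝ) * p|} = {ω | c ≤ |S ω - μ[S]|} := by
    ext ω
    rw [Set.mem_setOf_eq, Set.mem_setOf_eq, hScard ω, hSint]
  rw [hset]
  refine hcheb.trans ?_
  apply ENNReal.ofReal_le_ofReal
  apply div_le_div_of_nonneg_right hSvar (by positivity)



lemma aux_BC {Ω : Type*} [MeasurableSpace Ω] (μ : Measure Ω) {s : ℕ → Set Ω} {K r : ℝ}
    (hK : 0 ≤ K) (hr0 : 0 ≤ r) (hr1 : r < 1)
    (h : ∀ n, μ (s n) ≤ ENNReal.ofReal (K * r ^ n)) :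
    ∀ᵐ ω ∂μ, ∀ᶠ n in atTop, ω ∉ s n := by
  apply ae_eventually_notMem
  have heq : ∀ n : ℕ, ENNReal.ofReal (K * r ^ n) =
      ENNReal.ofReal K * (ENNReal.ofReal r) ^ n := by
    intro n
    rw [← ENNReal.ofReal_pow hr0, ← ENNReal.ofReal_mul hK]
  have hle : ∑' n, μ (s n) ≤ ∑' n : ℕ, ENNReal.ofReal K * (ENNReal.ofReal r) ^ n := by
    refine ENNReal.tsum_le_tsum (fun n => (h n).trans_eq (heq n))
  refine ne_top_of_le_ne_top ?_ hle
  rw [ENNReal.tsum_mul_left, ENNReal.tsum_geometric]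
  apply ENNReal.mul_ne_top ENNReal.ofReal_ne_top
  rw [Ne, ENNReal.inv_eq_top, tsub_eq_zero_iff_le]
  exact not_le.mpr (ENNReal.ofReal_lt_one.mpr hr1)



/-- Random clouds on the hypercube satisfy the minimal distance condition:
for `γ ∈ (3/4,1)` and Bernoulli(ρ_n) random clouds `A_n ⊂ {-1,1}^n` with
`ρ_n 2^{γn} → ρ ∈ (0,∞)`, almost surely there is `ε > 0` such that for all large `n`
any two distinct points of `A_n` are at Hamming distance at least `(ω(γ)+ε)n`, and
`|A_n|/(ρ_n 2^n) → 1`. -/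
theorem hypercube_random_cloud_minimal_distance
    {Ω : Type*} [MeasurableSpace Ω] {μ : Measure Ω} [IsProbabilityMeasure μ]
    (γ ρ : ℝ) (hγ : γ ∈ Set.Ioo (3/4 : ℝ) 1) (hρ : 0 < ρ)
    (ρseq : ℕ → ℝ) (hρseqpos : ∀ n, 0 < ρseq n)
    (hρseq : Tendsto (fun n : ℕ => ρseq n * (2 : ℝ) ^ (γ * n)) atTop (nhds ρ))
    -- the random cloud: each vertex belongs to `A_n` independently with probability `ρ_n`
    (B : ∀ n : ℕ, (Fin n → Bool) → Ω → Bool)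
    (hBmeas : ∀ n x, Measurable (B n x))
    (hBindep : iIndepFun
      (fun p : (Σ n : ℕ, Fin n → Bool) => B p.1 p.2) μ)
    (hBern : ∀ n x, μ {ω | B n x ω = true} = ENNReal.ofReal (ρseq n))
    -- ω(γ) : the unique solution in (0,1/2) of the entropy equation
    (ωγ : ℝ) (hωγ : ωγ ∈ Set.Ioo (0:ℝ) (1/2))
    (hωγeq : ωγ * Real.log ωγ + (1 - ωγ) * Real.log (1 - ωγ) + Real.log 2 =
      (2 * γ - 1) * Real.log 2) :
    ∀ᵐ ω ∂μ,
      (∃ ε : ℝ, 0 < ε ∧ ∀ᶠ n : ℕ in atTop, ∀ x y : Fin n → Bool,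
        B n x ω = true → B n y ω = true → x ≠ y → (ωγ + ε) * n ≤ hammingDist x y) ∧
      Tendsto (fun n : ℕ =>
          ((Finset.univ.filter (fun x : Fin n → Bool => B n x ω = true)).card : ℝ) /
            (ρseq n * 2 ^ n))
        atTop (nhds 1) := by
  classical
  obtain ⟨ε, hε, hε2, hεH⟩ := aux_eps γ ωγ hγ hωγ hωγeq
  obtain ⟨hγ1, hγ2⟩ := hγ
  have hlog2 : 0 < Real.log 2 := Real.log_pos (by norm_num)
  set α : ℝ := ωγ + ε with hαdef
  have hα0 : 0 < α := by have := hωγ.1; simp only [hαdef]; linarith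
  have hα2 : α ≤ 1/2 := le_of_lt hε2
  -- global bounds on the intensity sequence
  obtain ⟨C, hC⟩ : ∃ C : ℝ, ∀ n : ℕ, ρseq n * (2:ℝ) ^ (γ * (n:ℝ)) ≤ C := by
    obtain ⟨C, hC⟩ := hρseq.bddAbove_range
    exact ⟨C, fun n => hC (Set.mem_range_self n)⟩
  have hrpow_pos : ∀ n : ℕ, (0:ℝ) < (2:ℝ) ^ (γ * (n:ℝ)) :=
    fun n => Real.rpow_pos_of_pos (by norm_num) _
  have hC0 : 0 < C := lt_of_lt_of_le (mul_pos (hρseqpos 0) (hrpow_pos 0)) (hC 0)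
  obtain ⟨D, hD⟩ : ∃ D : ℝ, ∀ n : ℕ, (ρseq n * (2:ℝ) ^ (γ * (n:ℝ)))⁻¹ ≤ D := by
    have htend : Tendsto (fun n : ℕ => (ρseq n * (2:ℝ) ^ (γ * (n:ℝ)))⁻¹) atTop
        (nhds ρ⁻¹) := hρseq.inv₀ (ne_of_gt hρ)
    obtain ⟨D, hD⟩ := htend.bddAbove_range
    exact ⟨D, fun n => hD (Set.mem_range_self n)⟩
  have hD0 : 0 < D := lt_of_lt_of_le (inv_pos.mpr (mul_pos (hρseqpos 0) (hrpow_pos 0))) (hD 0)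
  -- ### Part 1 : minimal distance, via Borel-Cantelli
  set Hα : ℝ := -(α * Real.log α + (1-α) * Real.log (1-α)) with hHα
  set r1 : ℝ := Real.exp ((1-2*γ) * Real.log 2 + Hα) with hr1def
  have hr1pos : 0 < r1 := Real.exp_pos _
  have hr1lt : r1 < 1 := by
    rw [hr1def, Real.exp_lt_one_iff]
    have : Hα < (2*γ-1) * Real.log 2 := hεH
    linarith
  set m : ℕ → ℕ := fun n => Nat.floor (α * n) with hm
  set P : ∀ n : ℕ, Finset ((Fin n → Bool) × (Fin n → Bool)) := fun n =>
    Finset.univ.filter (fun p => p.1 ≠ p.2 ∧ hammingDist p.1 p.2 ≤ m n) with hP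
  set E : ℕ → Set Ω := fun n =>
    ⋃ p ∈ P n, ({ω | B n p.1 ω = true} ∩ {ω | B n p.2 ω = true}) with hE
  -- measure of each pair event
  have hpair : ∀ n : ℕ, ∀ p : (Fin n → Bool) × (Fin n → Bool), p.1 ≠ p.2 →
      μ ({ω | B n p.1 ω = true} ∩ {ω | B n p.2 ω = true}) =
        ENNReal.ofReal (ρseq n) * ENNReal.ofReal (ρseq n) := by
    intro n p hne
    have hσ : (⟨n, p.1⟩ : Σ k : ℕ, Fin k → Bool) ≠ ⟨n, p.2⟩ :=
      fun h => hne (sigma_mk_injective h)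
    have hind := hBindep.indepFun hσ
    have h2 := hind.measure_inter_preimage_eq_mul (s := {true}) (t := {true})
      trivial trivial
    have h3 : μ {ω | B n p.1 ω = true} * μ {ω | B n p.2 ω = true} =
        ENNReal.ofReal (ρseq n) * ENNReal.ofReal (ρseq n) := by
      rw [hBern n p.1, hBern n p.2]
    exact h2.trans h3
  -- per-n bound on μ (E n)
  have hEbound : ∀ n : ℕ, μ (E n) ≤ ENNReal.ofReal (C^2 * r1 ^ n) := by
    intro n
    have hmn : ((m n : ℝ)) ≤ α * n := Nat.floor_le (by positivity)
    -- cardinality bound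
    have hcard : ((P n).card : ℝ) ≤ 2^n * Real.exp (n * Hα) := by
      have h1 : (P n).card ≤ (Finset.univ.filter
          (fun p : (Fin n → Bool) × (Fin n → Bool) =>
            hammingDist p.1 p.2 ≤ m n)).card := by
        apply Finset.card_le_card
        rw [hP]
        exact Finset.monotone_filter_right _ (fun p _ hp => hp.2)
      have h2 := aux_card_pairs n (m n)
      have h3 : ((P n).card : ℝ) ≤ 2^n * ∑ k ∈ Finset.range (m n + 1), (n.choose k : ℝ) := by
        have := le_trans h1 h2
        push_cast
        exact_mod_cast this
      refine h3.trans ?_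
      have h4 := aux_tail_bound hα0 hα2 hmn
      have h5 : (0:ℝ) ≤ 2^n := by positivity
      rw [hHα]
      exact mul_le_mul_of_nonneg_left h4 h5
    -- intensity bound
    set u : ℝ := (2:ℝ) ^ (-(γ * (n:ℝ))) with hu
    have hu0 : 0 < u := Real.rpow_pos_of_pos (by norm_num) _
    have hρb : ρseq n ≤ C * u := by
      rw [hu, Real.rpow_neg (by norm_num : (0:ℝ) ≤ 2), ← div_eq_mul_inv,
        le_div_iff₀ (hrpow_pos n)]
      exact hC n
    -- real inequality
    have hreal : ((P n).card : ℝ) * (ρseq n * ρseq n) ≤ C^2 * r1 ^ n := by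
      have hstep : ((P n).card : ℝ) * (ρseq n * ρseq n)
          ≤ (2^n * Real.exp (n * Hα)) * ((C * u) * (C * u)) := by
        have hρ0 : (0:ℝ) ≤ ρseq n := (hρseqpos n).le
        have hCu : (0:ℝ) ≤ C * u := by positivity
        apply mul_le_mul hcard _ (by positivity) (by positivity)
        exact mul_le_mul hρb hρb hρ0 hCu
      refine hstep.trans_eq ?_
      have e1 : (2:ℝ)^n = Real.exp ((n:ℝ) * Real.log 2) := by
        rw [Real.exp_nat_mul, Real.exp_log (by norm_num : (0:ℝ) < 2)]
      have e3 : u = Real.exp (Real.log 2 * (-(γ * (n:ℝ)))) := by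
        rw [hu, Real.rpow_def_of_pos (by norm_num : (0:ℝ) < 2)]
      have e4 : r1 ^ n = Real.exp ((n:ℝ) * ((1-2*γ) * Real.log 2 + Hα)) := by
        rw [hr1def, ← Real.exp_nat_mul]
      calc (2^n * Real.exp (n * Hα)) * ((C * u) * (C * u))
          = C^2 * (Real.exp ((n:ℝ) * Real.log 2) * Real.exp ((n:ℝ) * Hα) *
              (Real.exp (Real.log 2 * (-(γ * (n:ℝ)))) *
                Real.exp (Real.log 2 * (-(γ * (n:ℝ)))))) := by
            rw [← e1, ← e3]; ring
        _ = C^2 * Real.exp ((n:ℝ) * Real.log 2 + (n:ℝ) * Hα +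
              (Real.log 2 * (-(γ * (n:ℝ))) + Real.log 2 * (-(γ * (n:ℝ))))) := by
            rw [← Real.exp_add, ← Real.exp_add, ← Real.exp_add]
        _ = C^2 * r1 ^ n := by
            rw [e4]; congr 1; ring
    -- put it together in ℝ≥0∞
    calc μ (E n) ≤ ∑ p ∈ P n, μ ({ω | B n p.1 ω = true} ∩ {ω | B n p.2 ω = true}) := by
          rw [hE]; exact measure_biUnion_finset_le _ _
      _ = ∑ _p ∈ P n, ENNReal.ofReal (ρseq n) * ENNReal.ofReal (ρseq n) := by
          apply Finset.sum_congr rfl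
          intro p hp
          rw [hP] at hp
          simp only [Finset.mem_filter, Finset.mem_univ, true_and] at hp
          exact hpair n p hp.1
      _ = ((P n).card : ℝ≥0∞) * (ENNReal.ofReal (ρseq n) * ENNReal.ofReal (ρseq n)) := by
          rw [Finset.sum_const, nsmul_eq_mul]
      _ = ENNReal.ofReal (((P n).card : ℝ) * (ρseq n * ρseq n)) := by
          rw [← ENNReal.ofReal_mul (hρseqpos n).le, ← ENNReal.ofReal_natCast ((P n).card),
            ← ENNReal.ofReal_mul (by positivity)]
      _ ≤ ENNReal.ofReal (C^2 * r1 ^ n) := ENNReal.ofReal_le_ofReal hreal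
  have hBC1 : ∀ᵐ ω ∂μ, ∀ᶠ n in atTop, ω ∉ E n :=
    aux_BC μ (by positivity) hr1pos.le hr1lt hEbound
  -- ### Part 2 : concentration of the cardinality, via Chebyshev + Borel-Cantelli
  set s2 : ℝ := Real.exp ((γ-1) * Real.log 2) with hs2def
  have hs2pos : 0 < s2 := Real.exp_pos _
  have hs2lt : s2 < 1 := by
    rw [hs2def, Real.exp_lt_one_iff]
    nlinarith
  set F : ℕ → ℕ → Set Ω := fun k n =>
    {ω | (1/((k:ℝ)+1)) * (ρseq n * 2^n) ≤
      |((Finset.univ.filter (fun x : Fin n → Bool => B n x ω = true)).card : ℝ) -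
        (Fintype.card (Fin n → Bool) : ℝ) * ρseq n|} with hF
  have hcardfun : ∀ n : ℕ, ((Fintype.card (Fin n → Bool) : ℝ)) = 2^n := by
    intro n
    simp [Fintype.card_fun]
  have hFbound : ∀ k n : ℕ, μ (F k n) ≤
      ENNReal.ofReal ((((k:ℝ)+1)^2 * D) * s2 ^ n) := by
    intro k n
    have hδ : (0:ℝ) < 1/((k:ℝ)+1) := by positivity
    have h2n : (0:ℝ) < (2:ℝ)^n := by positivity
    have hc : (0:ℝ) < (1/((k:ℝ)+1)) * (ρseq n * 2^n) := by
      have := hρseqpos n; positivity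
    have hcheb := aux_chebyshev (μ := μ) (f := fun x : Fin n → Bool => B n x)
      (hmeas := fun x => hBmeas n x)
      (hindep := fun x y hxy => hBindep.indepFun
        (show (⟨n, x⟩ : Σ k : ℕ, Fin k → Bool) ≠ ⟨n, y⟩ from
          fun h => hxy (sigma_mk_injective h)))
      (hp := (hρseqpos n).le) (hBern := fun x => hBern n x) (hc := hc)
    refine hcheb.trans (ENNReal.ofReal_le_ofReal ?_)
    -- real: card * p / c^2 ≤ (k+1)^2 * D * s2^n
    rw [hcardfun n]
    have hs2n : (2:ℝ)^n * s2 ^ n = (2:ℝ) ^ (γ * (n:ℝ)) := by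
      have e1 : (2:ℝ)^n = Real.exp ((n:ℝ) * Real.log 2) := by
        rw [Real.exp_nat_mul, Real.exp_log (by norm_num : (0:ℝ) < 2)]
      have e2 : s2 ^ n = Real.exp ((n:ℝ) * ((γ-1) * Real.log 2)) := by
        rw [hs2def, ← Real.exp_nat_mul]
      rw [e1, e2, ← Real.exp_add, Real.rpow_def_of_pos (by norm_num : (0:ℝ) < 2)]
      congr 1; ring
    have hρn := hρseqpos n
    have hinv : (ρseq n * (2:ℝ)^n)⁻¹ ≤ D * s2 ^ n := by
      have h1 : (ρseq n * (2:ℝ)^n)⁻¹ = (ρseq n * (2:ℝ) ^ (γ * (n:ℝ)))⁻¹ * s2 ^ n := by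
        rw [← hs2n]
        field_simp
      rw [h1]
      exact mul_le_mul_of_nonneg_right (hD n) (by positivity)
    have hceq : (2:ℝ)^n * ρseq n / ((1/((k:ℝ)+1)) * (ρseq n * 2^n))^2
        = ((k:ℝ)+1)^2 * (ρseq n * (2:ℝ)^n)⁻¹ := by
      field_simp
    rw [hceq]
    calc ((k:ℝ)+1)^2 * (ρseq n * (2:ℝ)^n)⁻¹ ≤ ((k:ℝ)+1)^2 * (D * s2 ^ n) :=
          mul_le_mul_of_nonneg_left hinv (by positivity)
      _ = (((k:ℝ)+1)^2 * D) * s2 ^ n := by ring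
  have hBC2 : ∀ᵐ ω ∂μ, ∀ k : ℕ, ∀ᶠ n in atTop, ω ∉ F k n := by
    rw [ae_all_iff]
    intro k
    exact aux_BC μ (by positivity) hs2pos.le hs2lt (hFbound k)
  -- ### combine
  filter_upwards [hBC1, hBC2] with ω hω1 hω2
  constructor
  · refine ⟨ε, hε, hω1.mono ?_⟩
    intro n hn x y hx hy hxy
    by_contra hcon
    push_neg at hcon
    have hd : hammingDist x y ≤ m n := by
      apply Nat.le_floor
      exact le_of_lt hcon
    apply hn
    rw [hE]
    apply Set.mem_iUnion₂.mpr
    refine ⟨(x, y), ?_, ⟨hx, hy⟩⟩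
    rw [hP]
    simp only [Finset.mem_filter, Finset.mem_univ, true_and]
    exact ⟨hxy, hd⟩
  · rw [Metric.tendsto_atTop]
    intro e he
    obtain ⟨k, hk⟩ := exists_nat_one_div_lt he
    obtain ⟨N, hN⟩ := eventually_atTop.mp (hω2 k)
    refine ⟨N, fun n hn => ?_⟩
    have hFn := hN n hn
    rw [hF] at hFn
    simp only [Set.mem_setOf_eq, not_le] at hFn
    rw [hcardfun n] at hFn
    have hρn := hρseqpos n
    have h2n : (0:ℝ) < (2:ℝ)^n := by positivity
    have hM : (0:ℝ) < ρseq n * 2^n := by positivity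
    rw [Real.dist_eq]
    have heq : ((Finset.univ.filter (fun x : Fin n → Bool => B n x ω = true)).card : ℝ) /
        (ρseq n * 2^n) - 1 =
        (((Finset.univ.filter (fun x : Fin n → Bool => B n x ω = true)).card : ℝ) -
          (2:ℝ)^n * ρseq n) / (ρseq n * 2^n) := by
      field_simp
    rw [heq, abs_div, abs_of_pos hM, div_lt_iff₀ hM]
    calc |((Finset.univ.filter (fun x : Fin n → Bool => B n x ω = true)).card : ℝ) -
          (2:ℝ)^n * ρseq n| < (1/((k:ℝ)+1)) * (ρseq n * 2^n) := hFn
      _ ≤ e * (ρseq n * 2^n) := by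
          apply mul_le_mul_of_nonneg_right (le_of_lt hk) hM.le
end
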